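/- arXiv:0907.5311 — 7 statements merged into one kernel-verified Lean document; each statement's English description precedes it below -/
import Mathlib

section
/- Zariski's sign lemma in matrix form: let M be a k×k real symmetric matrix that is negative definite and has nonnegative off-diagonal entries (M i j ≥ 0 for all i ≠ j). If x ∈ ℝ^k satisfies (M.mulVec x) j ≤ 0 for every index j, then x j ≥ 0 for every index j. -/
open Matrix BigOperators

/-- Zariski's sign lemma in matrix form: if `M` is a real symmetric negative
definite `k × k` matrix with nonnegative off-diagonal entries, and
`(M.mulVec x) j ≤ 0` for every `j`, then `x j ≥ 0` for every `j`. -/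
theorem zariski_sign_lemma {k : ℕ} (M : Matrix (Fin k) (Fin k) ℝ)
    (hsymm : M.IsSymm)
    (hnegdef : ∀ x : Fin k → ℝ, x ≠ 0 → x ⬝ᵥ M.mulVec x < 0)
    (hoffdiag : ∀ i j : Fin k, i ≠ j → 0 ≤ M i j)
    (x : Fin k → ℝ) (hx : ∀ j : Fin k, M.mulVec x j ≤ 0) :
    ∀ j : Fin k, 0 ≤ x j := by
  set y : Fin k → ℝ := fun j => max (-x j) 0 with hy
  have hy0 : ∀ j, 0 ≤ y j := fun j => le_max_right _ _
  have hxy0 : ∀ j, 0 ≤ x j + y j := by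
    intro j
    rcases le_total 0 (x j) with h | h
    · have : 0 ≤ y j := hy0 j; linarith
    · have : y j = -x j := max_eq_left (neg_nonneg.mpr h)
      rw [this]; linarith
  have hprod : ∀ j, y j * (x j + y j) = 0 := by
    intro j
    rcases le_total 0 (x j) with h | h
    · have : y j = 0 := max_eq_right (neg_nonpos.mpr h)
      rw [this]; ring
    · have : y j = -x j := max_eq_left (neg_nonneg.mpr h)
      rw [this]; ring
  have hyzero : y = 0 := by
    by_contra hne
    have hlt : y ⬝ᵥ M.mulVec y < 0 := hnegdef y hne
    have h1 : y ⬝ᵥ M.mulVec x ≤ 0 := by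
      apply Finset.sum_nonpos
      intro i _
      exact mul_nonpos_of_nonneg_of_nonpos (hy0 i) (hx i)
    have h2 : 0 ≤ y ⬝ᵥ M.mulVec (x + y) := by
      simp only [dotProduct, mulVec, Pi.add_apply]
      apply Finset.sum_nonneg
      intro i _
      rw [Finset.mul_sum]
      apply Finset.sum_nonneg
      intro j _
      rcases eq_or_ne i j with h | h
      · subst h
        have : y i * (M i i * (x i + y i)) = M i i * (y i * (x i + y i)) := by ring
        rw [this, hprod i, mul_zero]
      · exact mul_nonneg (hy0 i) (mul_nonneg (hoffdiag i j h) (hxy0 j))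
    have h3 : y ⬝ᵥ M.mulVec (x + y) = y ⬝ᵥ M.mulVec x + y ⬝ᵥ M.mulVec y := by
      rw [mulVec_add, dotProduct_add]
    linarith
  intro j
  have hyj : y j = 0 := by rw [hyzero]; rfl
  have h := le_max_left (-x j) 0
  rw [show max (-x j) 0 = y j from rfl, hyj] at h
  linarith
end

section
/- Suppose D ∈ V satisfies B(D, E_i) < 0 for every i = 1, …, k. Then there exist real numbers f_1, …, f_k ≥ 0 such that B(D − ∑_i f_i E_i, E_j) = 0 for every j = 1, …, k. -/
open BigOperators

set_option maxHeartbeats 1000000 in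
/-- First step of the constructive proof of the Zariski q-decomposition:
if `B (D, E_i) < 0` for every `i`, where the `E_i` pair nonnegatively off the
diagonal and have negative definite Gram matrix, then there are nonnegative
reals `f_i` with `B (D - ∑ f_i E_i, E_j) = 0` for every `j`. -/
theorem exists_nonneg_coeffs_orthogonalizing
    {V : Type*} [AddCommGroup V] [Module ℝ V] [FiniteDimensional ℝ V]
    (B : V →ₗ[ℝ] V →ₗ[ℝ] ℝ) (hsymm : ∀ u v : V, B u v = B v u)
    {k : ℕ} (E : Fin k → V)
    (hoffdiag : ∀ i j : Fin k, i ≠ j → 0 ≤ B (E i) (E j))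
    (hnegdef : ∀ x : Fin k → ℝ, x ≠ 0 →
      (∑ i : Fin k, ∑ j : Fin k, x i * x j * B (E i) (E j)) < 0)
    (D : V) (hD : ∀ i : Fin k, B D (E i) < 0) :
    ∃ f : Fin k → ℝ, (∀ i : Fin k, 0 ≤ f i) ∧
      ∀ j : Fin k, B (D - ∑ i : Fin k, f i • E i) (E j) = 0 := by
  classical
  rcases Nat.eq_zero_or_pos k with hk | hk
  · subst hk
    exact ⟨0, fun i => i.elim0, fun j => j.elim0⟩
  haveI : Nonempty (Fin k) := ⟨⟨0, hk⟩⟩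
  -- the vector associated to a coefficient vector
  set w : (Fin k → ℝ) → V := fun f => ∑ i, f i • E i with hw
  have hwB : ∀ (f : Fin k → ℝ) (u : V), B (w f) u = ∑ i, f i * B (E i) u := by
    intro f u
    simp [hw, map_sum, LinearMap.sum_apply, map_smul, LinearMap.smul_apply, smul_eq_mul]
  have hBw : ∀ (u : V) (f : Fin k → ℝ), B u (w f) = ∑ i, f i * B u (E i) := by
    intro u f
    simp [hw, map_smul, smul_eq_mul]
  have hQ : ∀ f : Fin k → ℝ, f ≠ 0 → B (w f) (w f) < 0 := by
    intro f hf
    have h := hnegdef f hf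
    calc B (w f) (w f) = ∑ i, f i * B (E i) (w f) := hwB _ _
      _ = ∑ i, ∑ j, f i * f j * B (E i) (E j) := by
          refine Finset.sum_congr rfl fun i _ => ?_
          rw [hBw, Finset.mul_sum]
          exact Finset.sum_congr rfl fun j _ => by ring
      _ < 0 := h
  have hwsmul : ∀ (c : ℝ) (f : Fin k → ℝ), w (c • f) = c • w f := by
    intro c f
    simp [hw, Finset.smul_sum, mul_smul]
  have hwadd : ∀ (f g : Fin k → ℝ), w (f + g) = w f + w g := by
    intro f g
    simp [hw, add_smul, Finset.sum_add_distrib]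
  have hwE : ∀ i : Fin k, w (((Pi.single i 1 : Fin k → ℝ))) = E i := by
    intro i
    simp [hw, Pi.single_apply, ite_smul, Finset.sum_ite_eq']
  -- the objective function
  set Φ : (Fin k → ℝ) → ℝ :=
    fun f => (∑ i, f i * B D (E i)) - (1/2) * (∑ i, ∑ j, f i * f j * B (E i) (E j)) with hΦ
  have hΦeq : ∀ f, Φ f = B D (w f) - (1/2) * B (w f) (w f) := by
    intro f
    have h1 : B D (w f) = ∑ i, f i * B D (E i) := hBw D f
    have h2 : B (w f) (w f) = ∑ i, ∑ j, f i * f j * B (E i) (E j) := by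
      rw [hwB]
      refine Finset.sum_congr rfl fun i _ => ?_
      rw [hBw, Finset.mul_sum]
      exact Finset.sum_congr rfl fun j _ => by ring
    rw [hΦ, h1, h2]
  have hΦcont : Continuous Φ := by
    rw [hΦ]
    apply Continuous.sub
    · exact continuous_finset_sum _ fun i _ => (continuous_apply i).mul continuous_const
    · exact continuous_const.mul <| continuous_finset_sum _ fun i _ =>
        continuous_finset_sum _ fun j _ =>
          (((continuous_apply i).mul (continuous_apply j)).mul continuous_const)
  -- positive-definiteness constant m from the compact sphere
  obtain ⟨z, hz, hzmin⟩ := (isCompact_sphere (0 : Fin k → ℝ) 1).exists_isMinOn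
    (NormedSpace.sphere_nonempty.mpr zero_le_one)
    (continuous_neg.comp <| by
      exact continuous_finset_sum _ fun i _ => continuous_finset_sum _ fun j _ =>
        (((continuous_apply i).mul (continuous_apply j)).mul continuous_const)
      : Continuous fun f : Fin k → ℝ =>
        -(∑ i, ∑ j, f i * f j * B (E i) (E j))).continuousOn
  have hz1 : ‖z‖ = 1 := by simpa using mem_sphere_zero_iff_norm.mp hz
  have hzne : z ≠ 0 := by
    intro h; rw [h] at hz1; simp at hz1
  set m : ℝ := -(B (w z) (w z)) with hm
  have hm0 : 0 < m := by
    have := hQ z hzne; linarith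
  have hQcoord : ∀ f : Fin k → ℝ,
      B (w f) (w f) = ∑ i, ∑ j, f i * f j * B (E i) (E j) := by
    intro f
    rw [hwB]
    refine Finset.sum_congr rfl fun i _ => ?_
    rw [hBw, Finset.mul_sum]
    exact Finset.sum_congr rfl fun j _ => by ring
  have hmQ : ∀ f : Fin k → ℝ, m * ‖f‖ ^ 2 ≤ -(B (w f) (w f)) := by
    intro f
    by_cases hf : f = 0
    · subst hf; simp [hw]
    · have hfn : (0:ℝ) < ‖f‖ := norm_pos_iff.mpr hf
      have hmem : (‖f‖⁻¹ • f) ∈ Metric.sphere (0 : Fin k → ℝ) 1 := by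
        rw [mem_sphere_zero_iff_norm, norm_smul, norm_inv, norm_norm]
        field_simp
      have hle := hzmin hmem
      have hval : -(B (w (‖f‖⁻¹ • f)) (w (‖f‖⁻¹ • f)))
          = ‖f‖⁻¹ ^ 2 * (-(B (w f) (w f))) := by
        rw [hwsmul]
        simp only [map_smul, LinearMap.smul_apply, smul_eq_mul]
        ring
      have hle' : m ≤ ‖f‖⁻¹ ^ 2 * (-(B (w f) (w f))) := by
        rw [← hval]
        simpa [hQcoord, hm] using hle
      have := mul_le_mul_of_nonneg_left hle' (le_of_lt (by positivity : (0:ℝ) < ‖f‖ ^ 2))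
      calc m * ‖f‖ ^ 2 = ‖f‖ ^ 2 * m := by ring
        _ ≤ ‖f‖ ^ 2 * (‖f‖⁻¹ ^ 2 * (-(B (w f) (w f)))) := this
        _ = -(B (w f) (w f)) := by field_simp
  -- linear-term bound
  set M : ℝ := ∑ i, |B D (E i)| with hM
  have hM0 : 0 ≤ M := Finset.sum_nonneg fun i _ => abs_nonneg _
  have hLbound : ∀ f : Fin k → ℝ, |∑ i, f i * B D (E i)| ≤ M * ‖f‖ := by
    intro f
    calc |∑ i, f i * B D (E i)| ≤ ∑ i, |f i * B D (E i)| :=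
          Finset.abs_sum_le_sum_abs _ _
      _ ≤ ∑ i, |B D (E i)| * ‖f‖ := by
          refine Finset.sum_le_sum fun i _ => ?_
          rw [abs_mul, mul_comm]
          have : |f i| ≤ ‖f‖ := by
            simpa [Real.norm_eq_abs] using norm_le_pi_norm f i
          exact mul_le_mul_of_nonneg_left this (abs_nonneg _)
      _ = M * ‖f‖ := by rw [hM, Finset.sum_mul]
  have hΦlower : ∀ f : Fin k → ℝ, (m/2) * ‖f‖ ^ 2 - M * ‖f‖ ≤ Φ f := by
    intro f
    have h1 := hmQ f
    have h2 := hLbound f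
    have h3 := neg_abs_le (∑ i, f i * B D (E i))
    rw [hΦeq, hBw]
    nlinarith [h1, h2, h3]
  -- compact feasible region
  set R : ℝ := 2 * M / m + 1 with hR
  have hR0 : 0 < R := by positivity
  set K : Set (Fin k → ℝ) := {f | ∀ i, 0 ≤ f i} ∩ Metric.closedBall 0 R with hK
  have hconeclosed : IsClosed {f : Fin k → ℝ | ∀ i, 0 ≤ f i} := by
    have : {f : Fin k → ℝ | ∀ i, 0 ≤ f i} = ⋂ i, {f | 0 ≤ f i} := by
      ext; simp [Set.mem_iInter]
    rw [this]
    exact isClosed_iInter fun i => isClosed_le continuous_const (continuous_apply i)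
  have hKcompact : IsCompact K :=
    (isCompact_closedBall (0 : Fin k → ℝ) R).inter_left hconeclosed
  have h0K : (0 : Fin k → ℝ) ∈ K :=
    ⟨fun i => le_refl 0, by simpa [Metric.mem_closedBall] using hR0.le⟩
  obtain ⟨f, hfK, hfmin⟩ := hKcompact.exists_isMinOn ⟨0, h0K⟩ hΦcont.continuousOn
  have hfnonneg : ∀ i, 0 ≤ f i := hfK.1
  have hΦf0 : Φ f ≤ 0 := by
    have := hfmin h0K
    simpa [hΦ] using this
  have hfR : ‖f‖ < R := by
    by_contra hge
    push_neg at hge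
    have h1 := hΦlower f
    have h2 : (m/2) * ‖f‖ ^ 2 - M * ‖f‖ ≤ 0 := le_trans h1 hΦf0
    have hn : 0 ≤ ‖f‖ := norm_nonneg f
    have hmR : m * R = 2 * M + m := by rw [hR]; field_simp
    have h3 : m * R ≤ m * ‖f‖ := mul_le_mul_of_nonneg_left hge hm0.le
    have h4 : 0 ≤ m * ‖f‖ - (2 * M + m) := by linarith
    nlinarith [mul_nonneg h4 hn, h2, hm0, hM0]
  -- expansion of Φ along a coordinate direction
  have hexp : ∀ (i : Fin k) (t : ℝ),
      Φ (f + t • ((Pi.single i 1 : Fin k → ℝ))) = Φ f + t * (B D (E i) - B (w f) (E i))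
        - t ^ 2 / 2 * B (E i) (E i) := by
    intro i t
    have hwkey : w (f + t • ((Pi.single i 1 : Fin k → ℝ))) = w f + t • E i := by
      rw [hwadd, hwsmul, hwE]
    have e1 : B D (w f + t • E i) = B D (w f) + t * B D (E i) := by
      simp
    have e2 : B (w f + t • E i) (w f + t • E i)
        = B (w f) (w f) + 2 * t * B (w f) (E i) + t ^ 2 * B (E i) (E i) := by
      simp only [map_add, map_smul, LinearMap.add_apply, LinearMap.smul_apply, smul_eq_mul]
      linear_combination t * hsymm (E i) (w f)
    rw [hΦeq, hΦeq, hwkey, e1, e2]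
    ring
  -- the "gradient"
  set g : Fin k → ℝ := fun i => B D (E i) - B (w f) (E i) with hg
  have hnormsingle : ∀ i : Fin k, ‖(((Pi.single i 1 : Fin k → ℝ)))‖ ≤ 1 := by
    intro i
    refine (pi_norm_le_iff_of_nonneg zero_le_one).mpr fun j => ?_
    rw [Real.norm_eq_abs, Pi.single_apply]
    split <;> simp
  have hsingle_nonneg : ∀ i j : Fin k, (0:ℝ) ≤ ((Pi.single i 1 : Fin k → ℝ)) j := by
    intro i j
    rw [Pi.single_apply]; split <;> norm_num
  have hc : ∀ i : Fin k, 0 < -(B (E i) (E i)) := by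
    intro i
    have hne : (((Pi.single i 1 : Fin k → ℝ))) ≠ 0 := by
      intro h
      have := congrFun h i
      simp at this
    have := hQ _ hne
    rw [hwE] at this
    linarith
  -- Step A: g i ≥ 0 for all i
  have hgA : ∀ i, 0 ≤ g i := by
    intro i
    by_contra hneg
    push_neg at hneg
    set c : ℝ := -(B (E i) (E i)) with hcdef
    have hc0 : 0 < c := hc i
    set t : ℝ := min ((-g i) / c) (R - ‖f‖) with ht
    have ht0 : 0 < t := by
      apply lt_min
      · exact div_pos (by linarith) hc0
      · linarith
    have hmem : f + t • ((Pi.single i 1 : Fin k → ℝ)) ∈ K := by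
      constructor
      · intro j
        exact add_nonneg (hfnonneg j)
          (mul_nonneg ht0.le (hsingle_nonneg i j))
      · rw [Metric.mem_closedBall, dist_zero_right]
        calc ‖f + t • ((Pi.single i 1 : Fin k → ℝ))‖ ≤ ‖f‖ + ‖t • (((Pi.single i 1 : Fin k → ℝ)))‖ :=
              norm_add_le _ _
          _ ≤ ‖f‖ + t * 1 := by
              rw [norm_smul, Real.norm_eq_abs, abs_of_pos ht0]
              exact add_le_add (le_refl _) (mul_le_mul_of_nonneg_left (hnormsingle i) ht0.le)
          _ ≤ R := by
              have : t ≤ R - ‖f‖ := min_le_right _ _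
              linarith
    have hle : Φ f ≤ Φ (f + t • ((Pi.single i 1 : Fin k → ℝ))) := hfmin hmem
    rw [hexp] at hle
    have htc : t * c ≤ -g i := by
      have h1 : t ≤ (-g i) / c := min_le_left _ _
      calc t * c ≤ ((-g i) / c) * c := mul_le_mul_of_nonneg_right h1 hc0.le
        _ = -g i := by field_simp
    have hle' : Φ f ≤ Φ f + t * g i - t ^ 2 / 2 * B (E i) (E i) := hle
    have hth : t * (t * c) ≤ t * (-g i) := mul_le_mul_of_nonneg_left htc ht0.le
    have h3 : 0 < t * (-g i) := mul_pos ht0 (by linarith)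
    have hBc : B (E i) (E i) = -c := by rw [hcdef]; ring
    rw [hBc, pow_two] at hle'
    have hX : t * -g i = -(t * g i) := by ring
    have hY : t * (t * c) = t * t * c := by ring
    rw [hX] at hth h3
    rw [hY] at hth
    clear_value t c g Φ
    linarith [hle', hth, h3]
  -- Step B: f i > 0 for all i
  have hfpos : ∀ i, 0 < f i := by
    intro i
    rcases lt_or_eq_of_le (hfnonneg i) with h | h
    · exact h
    have hBwEi : 0 ≤ B (w f) (E i) := by
      rw [hwB]
      refine Finset.sum_nonneg fun j _ => ?_
      by_cases hji : j = i
      · subst hji; rw [← h]; simp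
      · exact mul_nonneg (hfnonneg j) (hoffdiag j i hji)
    have : g i < 0 := by
      have := hD i
      rw [hg]
      simp only []
      linarith
    exact absurd (hgA i) (not_le.mpr this)
  -- Step C: g i ≤ 0 for all i
  have hgC : ∀ i, g i ≤ 0 := by
    intro i
    by_contra hpos
    push_neg at hpos
    set c : ℝ := -(B (E i) (E i)) with hcdef
    have hc0 : 0 < c := hc i
    set s : ℝ := min (min (g i / c) (f i)) (R - ‖f‖) with hs
    have hs0 : 0 < s := by
      apply lt_min
      · apply lt_min
        · positivity
        · exact hfpos i
      · linarith
    have hsf : s ≤ f i := le_trans (min_le_left _ _) (min_le_right _ _)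
    have hsc : s * c ≤ g i := by
      have h1 : s ≤ g i / c := le_trans (min_le_left _ _) (min_le_left _ _)
      calc s * c ≤ (g i / c) * c := mul_le_mul_of_nonneg_right h1 hc0.le
        _ = g i := by field_simp
    have hmem : f + (-s) • ((Pi.single i 1 : Fin k → ℝ)) ∈ K := by
      constructor
      · intro j
        by_cases hji : j = i
        · subst hji
          simp only [Pi.add_apply, Pi.smul_apply, Pi.single_eq_same, smul_eq_mul, mul_one]
          linarith
        · simp only [Pi.add_apply, Pi.smul_apply, smul_eq_mul,
            Pi.single_eq_of_ne hji]
          simpa using hfnonneg j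
      · rw [Metric.mem_closedBall, dist_zero_right]
        calc ‖f + (-s) • ((Pi.single i 1 : Fin k → ℝ))‖ ≤ ‖f‖ + ‖(-s) • (((Pi.single i 1 : Fin k → ℝ)))‖ :=
              norm_add_le _ _
          _ ≤ ‖f‖ + s * 1 := by
              rw [norm_smul, Real.norm_eq_abs, abs_neg, abs_of_pos hs0]
              exact add_le_add (le_refl _) (mul_le_mul_of_nonneg_left (hnormsingle i) hs0.le)
          _ ≤ R := by
              have : s ≤ R - ‖f‖ := min_le_right _ _
              linarith
    have hle : Φ f ≤ Φ (f + (-s) • ((Pi.single i 1 : Fin k → ℝ))) := hfmin hmem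
    rw [hexp] at hle
    have hle' : Φ f ≤ Φ f + (-s) * g i - (-s) ^ 2 / 2 * B (E i) (E i) := hle
    have hth : s * (s * c) ≤ s * g i := mul_le_mul_of_nonneg_left hsc hs0.le
    have h3 : 0 < s * g i := mul_pos hs0 hpos
    have hBc : B (E i) (E i) = -c := by rw [hcdef]; ring
    have hle'' : Φ f ≤ Φ f + (-(s * g i)) - s * s / 2 * (-c) := by
      calc Φ f ≤ Φ f + (-s) * g i - (-s) ^ 2 / 2 * B (E i) (E i) := hle'
        _ = Φ f + (-(s * g i)) - s * s / 2 * (-c) := by rw [hBc]; ring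
    have hY : s * (s * c) = s * s * c := by ring
    rw [hY] at hth
    clear_value s c g Φ
    linarith [hle'', hth, h3]
  refine ⟨f, hfnonneg, fun j => ?_⟩
  have hgz : B D (E j) - B (w f) (E j) = 0 := le_antisymm (hgC j) (hgA j)
  have hwf : (∑ i : Fin k, f i • E i) = w f := rfl
  rw [hwf, map_sub, LinearMap.sub_apply]
  linarith
end

section
/- Abstract Zariski q-decomposition relative to a finite family: for every D ∈ V there exist unique real numbers a_1, …, a_k ≥ 0 such that, setting P = D − ∑_i a_i E_i, one has B(P, E_j) ≥ 0 for every j and a_j · B(P, E_j) = 0 for every j (i.e. B(P, E_j) = 0 whenever a_j > 0). -/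
open BigOperators Finset

/-- Expansion of the objective along a single-coordinate perturbation. -/
lemma zar_expand {k : ℕ} (M : Fin k → Fin k → ℝ) (hM : ∀ i j, M i j = M j i)
    (d : Fin k → ℝ) (x : Fin k → ℝ) (j : Fin k) (t : ℝ) :
    (∑ j', d j' * (x + Pi.single j t : Fin k → ℝ) j') -
      (1/2) * ∑ i, ∑ j', (x + Pi.single j t : Fin k → ℝ) i * (x + Pi.single j t : Fin k → ℝ) j' * M i j'
    = ((∑ j', d j' * x j') - (1/2) * ∑ i, ∑ j', x i * x j' * M i j')
      + t * (d j - ∑ i, x i * M i j) - t^2 * M j j / 2 := by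
  have hlin : (∑ j', d j' * (x + Pi.single j t : Fin k → ℝ) j') = (∑ j', d j' * x j') + t * d j := by
    simp only [Pi.add_apply, mul_add, Finset.sum_add_distrib, Pi.single_apply, mul_ite, mul_zero,
      Finset.sum_ite_eq', Finset.mem_univ, if_true]
    ring
  have hquad : (∑ i, ∑ j', (x + Pi.single j t : Fin k → ℝ) i * (x + Pi.single j t : Fin k → ℝ) j' * M i j')
      = (∑ i, ∑ j', x i * x j' * M i j') + 2 * t * (∑ i, x i * M i j) + t^2 * M j j := by
    have h1 : ∀ i j' : Fin k, (x + Pi.single j t : Fin k → ℝ) i * (x + Pi.single j t : Fin k → ℝ) j' * M i j'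
        = x i * x j' * M i j' + (x i * (Pi.single j t : Fin k → ℝ) j' * M i j'
          + ((Pi.single j t : Fin k → ℝ) i * x j' * M i j' + (Pi.single j t : Fin k → ℝ) i * (Pi.single j t : Fin k → ℝ) j' * M i j')) := by
      intro i j'; simp only [Pi.add_apply]; ring
    simp only [h1, Finset.sum_add_distrib]
    have h2 : (∑ i, ∑ j', x i * (Pi.single j t : Fin k → ℝ) j' * M i j') = t * ∑ i, x i * M i j := by
      simp only [Pi.single_apply, mul_ite, ite_mul, mul_zero, zero_mul,
        Finset.sum_ite_eq', Finset.mem_univ, if_true, Finset.mul_sum]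
      exact Finset.sum_congr rfl fun i _ => by ring
    have h3 : (∑ i, ∑ j', (Pi.single j t : Fin k → ℝ) i * x j' * M i j') = t * ∑ i, x i * M i j := by
      rw [Finset.sum_comm]
      simp only [Pi.single_apply, mul_ite, ite_mul, mul_zero, zero_mul,
        Finset.sum_ite_eq', Finset.mem_univ, if_true, Finset.mul_sum]
      exact Finset.sum_congr rfl fun i _ => by rw [hM j i]; ring
    have h4 : (∑ i, ∑ j', (Pi.single j t : Fin k → ℝ) i * (Pi.single j t : Fin k → ℝ) j' * M i j') = t^2 * M j j := by
      simp only [Pi.single_apply, mul_ite, ite_mul, mul_zero, zero_mul,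
        Finset.sum_ite_eq', Finset.mem_univ, if_true]
      ring
    rw [h2, h3, h4]; ring
  rw [hlin, hquad]; ring

lemma zar_lcp {k : ℕ} (M : Fin k → Fin k → ℝ) (hM : ∀ i j, M i j = M j i)
    (hneg : ∀ x : Fin k → ℝ, x ≠ 0 → (∑ i, ∑ j, x i * x j * M i j) < 0)
    (d : Fin k → ℝ) :
    ∃! a : Fin k → ℝ, (∀ i, 0 ≤ a i) ∧ (∀ j, 0 ≤ d j - ∑ i, a i * M i j) ∧
      (∀ j, a j * (d j - ∑ i, a i * M i j) = 0) := by
  -- uniqueness, valid for all k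
  have uniq : ∀ a b : Fin k → ℝ,
      ((∀ i, 0 ≤ a i) ∧ (∀ j, 0 ≤ d j - ∑ i, a i * M i j) ∧
        (∀ j, a j * (d j - ∑ i, a i * M i j) = 0)) →
      ((∀ i, 0 ≤ b i) ∧ (∀ j, 0 ≤ d j - ∑ i, b i * M i j) ∧
        (∀ j, b j * (d j - ∑ i, b i * M i j) = 0)) → b = a := by
    intro a b ⟨ha0, haw, hac⟩ ⟨hb0, hbw, hbc⟩
    by_contra hne
    set c : Fin k → ℝ := fun i => a i - b i with hc
    have hcne : c ≠ 0 := by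
      intro h
      apply hne
      funext i
      have := congrFun h i
      simp [hc] at this
      linarith
    have hnegc := hneg c hcne
    have key : ∑ j, c j * ((d j - ∑ i, a i * M i j) - (d j - ∑ i, b i * M i j))
        = -∑ i, ∑ j, c i * c j * M i j := by
      have e1 : ∀ j, (d j - ∑ i, a i * M i j) - (d j - ∑ i, b i * M i j)
          = -∑ i, c i * M i j := by
        intro j
        have h : ∑ i, c i * M i j = (∑ i, a i * M i j) - ∑ i, b i * M i j := by
          rw [← Finset.sum_sub_distrib]
          exact Finset.sum_congr rfl fun i _ => by simp only [hc]; ring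
        rw [h]; ring
      have e2 : ∀ j, c j * (-(∑ i, c i * M i j)) = -(∑ i, c i * c j * M i j) := by
        intro j
        simp only [mul_neg, Finset.mul_sum, neg_inj]
        exact Finset.sum_congr rfl fun i _ => by ring
      calc ∑ j, c j * ((d j - ∑ i, a i * M i j) - (d j - ∑ i, b i * M i j))
          = ∑ j, -(∑ i, c i * c j * M i j) := by
            exact Finset.sum_congr rfl fun j _ => by rw [e1 j, e2 j]
        _ = -∑ j, ∑ i, c i * c j * M i j := by
            rw [Finset.sum_neg_distrib]
        _ = -∑ i, ∑ j, c i * c j * M i j := by rw [Finset.sum_comm]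
    have hle : ∑ j, c j * ((d j - ∑ i, a i * M i j) - (d j - ∑ i, b i * M i j)) ≤ 0 := by
      have e2 : ∀ j, c j * ((d j - ∑ i, a i * M i j) - (d j - ∑ i, b i * M i j))
          = (a j * (d j - ∑ i, a i * M i j) + b j * (d j - ∑ i, b i * M i j))
            - (a j * (d j - ∑ i, b i * M i j) + b j * (d j - ∑ i, a i * M i j)) := by
        intro j; simp only [hc]; ring
      rw [Finset.sum_congr rfl fun j _ => e2 j, Finset.sum_sub_distrib,
        Finset.sum_add_distrib, Finset.sum_add_distrib]
      have z1 : ∑ j, a j * (d j - ∑ i, a i * M i j) = 0 := Finset.sum_eq_zero fun j _ => hac j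
      have z2 : ∑ j, b j * (d j - ∑ i, b i * M i j) = 0 := Finset.sum_eq_zero fun j _ => hbc j
      have p1 : 0 ≤ ∑ j, a j * (d j - ∑ i, b i * M i j) :=
        Finset.sum_nonneg fun j _ => mul_nonneg (ha0 j) (hbw j)
      have p2 : 0 ≤ ∑ j, b j * (d j - ∑ i, a i * M i j) :=
        Finset.sum_nonneg fun j _ => mul_nonneg (hb0 j) (haw j)
      linarith
    linarith [key ▸ hle]
  -- existence
  rcases Nat.eq_zero_or_pos k with hk | hk
  · subst hk
    refine ⟨0, ⟨fun i => i.elim0, fun j => j.elim0, fun j => j.elim0⟩,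
      fun b _ => Subsingleton.elim b 0⟩
  haveI : Nonempty (Fin k) := Fin.pos_iff_nonempty.mp hk
  set g : (Fin k → ℝ) → ℝ := fun x => ∑ i, ∑ j, x i * x j * M i j with hgdef
  have hgc : Continuous g := by
    apply continuous_finset_sum
    intro i _
    apply continuous_finset_sum
    intro j _
    exact ((continuous_apply i).mul (continuous_apply j)).mul continuous_const
  have hhom : ∀ (c : ℝ) (x : Fin k → ℝ), g (c • x) = c^2 * g x := by
    intro c x
    simp only [hgdef, Pi.smul_apply, smul_eq_mul, Finset.mul_sum]
    exact Finset.sum_congr rfl fun i _ => Finset.sum_congr rfl fun j _ => by ring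
  obtain ⟨u, hu, hmax⟩ := (isCompact_sphere (0 : Fin k → ℝ) 1).exists_isMaxOn
    (NormedSpace.sphere_nonempty.mpr zero_le_one) hgc.continuousOn
  have hun : ‖u‖ = 1 := mem_sphere_zero_iff_norm.mp hu
  have hune : u ≠ 0 := fun h => by simp [h] at hun
  set lam : ℝ := -g u with hlam
  have hlampos : 0 < lam := by
    have := hneg u hune
    simp only [hlam]
    linarith [this]
  have hbound : ∀ x : Fin k → ℝ, g x ≤ -lam * ‖x‖^2 := by
    intro x
    by_cases hx : x = 0
    · simp [hx, hgdef]
    · have hnx : (0:ℝ) < ‖x‖ := norm_pos_iff.mpr hx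
      set u' : Fin k → ℝ := ‖x‖⁻¹ • x with hu'
      have hu'n : ‖u'‖ = 1 := norm_smul_inv_norm hx
      have hgu' : g u' ≤ g u := isMaxOn_iff.mp hmax u' (mem_sphere_zero_iff_norm.mpr hu'n)
      have hx' : x = ‖x‖ • u' := by
        rw [hu', smul_smul, mul_inv_cancel₀ (ne_of_gt hnx), one_smul]
      calc g x = ‖x‖^2 * g u' := by rw [hx', hhom]; rw [← hx']
        _ ≤ ‖x‖^2 * g u := by
            exact mul_le_mul_of_nonneg_left hgu' (sq_nonneg _)
        _ = -lam * ‖x‖^2 := by simp [hlam]; ring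
  set Dn : ℝ := ∑ j, |d j| with hDn
  have hDn0 : 0 ≤ Dn := Finset.sum_nonneg fun j _ => abs_nonneg _
  set R : ℝ := 2 * Dn / lam with hR
  have hR0 : 0 ≤ R := div_nonneg (by linarith) (le_of_lt hlampos)
  set C : ℝ := R + 1 with hC
  have hC0 : (0:ℝ) ≤ C := by linarith
  set K : Set (Fin k → ℝ) := Set.Icc 0 (fun _ => C) with hK
  have h0K : (0 : Fin k → ℝ) ∈ K := Set.mem_Icc.mpr ⟨le_refl _, fun i => hC0⟩
  have hfc : Continuous fun x : Fin k → ℝ =>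
      (∑ j', d j' * x j') - (1/2) * ∑ i, ∑ j', x i * x j' * M i j' := by
    apply Continuous.sub
    · exact continuous_finset_sum _ fun j _ => continuous_const.mul (continuous_apply j)
    · exact continuous_const.mul hgc
  obtain ⟨a, haK, hmin⟩ := (isCompact_Icc (a := (0 : Fin k → ℝ)) (b := fun _ => C)).exists_isMinOn
    ⟨0, h0K⟩ hfc.continuousOn
  have hminle : ∀ x ∈ K, (∑ j', d j' * a j') - (1/2) * ∑ i, ∑ j', a i * a j' * M i j'
      ≤ (∑ j', d j' * x j') - (1/2) * ∑ i, ∑ j', x i * x j' * M i j' :=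
    fun x hx => isMinOn_iff.mp hmin x hx
  have ha0 : ∀ i, 0 ≤ a i := fun i => (Set.mem_Icc.mp haK).1 i
  have haCle : ∀ i, a i ≤ C := fun i => (Set.mem_Icc.mp haK).2 i
  have hfa0 : (∑ j', d j' * a j') - (1/2) * ∑ i, ∑ j', a i * a j' * M i j' ≤ 0 := by
    have := hminle 0 h0K
    simpa using this
  have hda : -(Dn * ‖a‖) ≤ ∑ j', d j' * a j' := by
    have : ∀ j : Fin k, -(|d j| * ‖a‖) ≤ d j * a j := by
      intro j
      have h1 : |d j * a j| ≤ |d j| * ‖a‖ := by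
        rw [abs_mul]
        exact mul_le_mul_of_nonneg_left
          ((Real.norm_eq_abs (a j)) ▸ norm_le_pi_norm a j) (abs_nonneg _)
      linarith [neg_abs_le (d j * a j)]
    calc -(Dn * ‖a‖) = ∑ j, -(|d j| * ‖a‖) := by
          rw [Finset.sum_neg_distrib, ← Finset.sum_mul]
      _ ≤ ∑ j', d j' * a j' := Finset.sum_le_sum fun j _ => this j
  have hnormR : ‖a‖ ≤ R := by
    have hga : g a ≤ -lam * ‖a‖^2 := hbound a
    rcases eq_or_lt_of_le (norm_nonneg a) with h | h
    · rw [← h]; exact hR0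
    · rw [hR, le_div_iff₀ hlampos]
      have : (1/2) * g a ≥ (∑ j', d j' * a j') := by linarith [hfa0]
      nlinarith [this, hga, h]
  have haC : ∀ i, a i < C := by
    intro i
    have h1 : a i ≤ ‖a‖ :=
      le_trans (le_abs_self _) ((Real.norm_eq_abs (a i)) ▸ norm_le_pi_norm a i)
    calc a i ≤ ‖a‖ := h1
      _ ≤ R := hnormR
      _ < C := by rw [hC]; linarith
  -- membership of perturbations
  have hmem : ∀ (j : Fin k) (t : ℝ), 0 ≤ a j + t → a j + t ≤ C →
      (a + Pi.single j t : Fin k → ℝ) ∈ K := by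
    intro j t h1 h2
    refine Set.mem_Icc.mpr ⟨fun i => ?_, fun i => ?_⟩
    · by_cases hij : i = j
      · subst hij; simpa using h1
      · simp [Pi.single_apply, hij, ha0 i]
    · by_cases hij : i = j
      · subst hij; simpa using h2
      · simp [Pi.single_apply, hij, haCle i]
  have hKKT : ∀ (j : Fin k) (t : ℝ), (a + Pi.single j t : Fin k → ℝ) ∈ K →
      0 ≤ t * (d j - ∑ i, a i * M i j) - t^2 * M j j / 2 := by
    intro j t hm
    have h := hminle _ hm
    rw [zar_expand M hM d a j t] at h
    linarith
  have hQ : ∀ j, M j j < 0 := by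
    intro j
    have hne1 : (Pi.single j (1:ℝ) : Fin k → ℝ) ≠ 0 := by
      intro h
      have := congrFun h j
      simp at this
    have := hneg _ hne1
    have hsum : ∑ i, ∑ j', (Pi.single j (1:ℝ) : Fin k → ℝ) i *
        (Pi.single j (1:ℝ) : Fin k → ℝ) j' * M i j' = M j j := by
      simp [Pi.single_apply, mul_ite, ite_mul, zero_mul, mul_zero,
        Finset.sum_ite_eq', Finset.mem_univ]
    rw [hsum] at this
    exact this
  -- first KKT condition
  have hw : ∀ j, 0 ≤ d j - ∑ i, a i * M i j := by
    intro j
    by_contra hwj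
    push_neg at hwj
    set w : ℝ := d j - ∑ i, a i * M i j with hwdef
    set t : ℝ := min (C - a j) (w / M j j) with ht
    have htp1 : 0 < C - a j := by linarith [haC j]
    have htp2 : 0 < w / M j j := div_pos_of_neg_of_neg hwj (hQ j)
    have htpos : 0 < t := lt_min htp1 htp2
    have hmem' : (a + Pi.single j t : Fin k → ℝ) ∈ K :=
      hmem j t (by linarith [ha0 j]) (by have := min_le_left (C - a j) (w / M j j); linarith)
    have hk2 := hKKT j t hmem'
    have htle : w ≤ t * M j j := by
      have h1 : t ≤ w / M j j := min_le_right _ _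
      exact (le_div_iff_of_neg (hQ j)).mp h1
    nlinarith [mul_pos htpos htpos, hk2, htle, htpos, hwj]
  -- complementarity
  have hcomp : ∀ j, a j * (d j - ∑ i, a i * M i j) = 0 := by
    intro j
    by_contra hcj
    set w : ℝ := d j - ∑ i, a i * M i j with hwdef
    have haj : 0 < a j := lt_of_le_of_ne (ha0 j) fun h => hcj (by rw [← h]; ring)
    have hwj : 0 < w := by
      rcases eq_or_lt_of_le (hw j) with h | h
      · exact absurd (by rw [hwdef, ← h, mul_zero]) hcj
      · exact h
    set t : ℝ := -min (a j) (w / (-M j j)) with ht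
    have htp2 : 0 < w / (-M j j) := div_pos hwj (by linarith [hQ j])
    have htneg : t < 0 := by
      rw [ht, neg_lt_zero]
      exact lt_min haj htp2
    have hmem' : (a + Pi.single j t : Fin k → ℝ) ∈ K := by
      apply hmem j t
      · have := min_le_left (a j) (w / (-M j j)); rw [ht]; linarith
      · have := haCle j; linarith
    have hk2 := hKKT j t hmem'
    have htle : (-t) * (-M j j) ≤ w := by
      have h1 : -t ≤ w / (-M j j) := by rw [ht, neg_neg]; exact min_le_right _ _
      exact (le_div_iff₀ (by linarith [hQ j])).mp h1
    have htle' : t * M j j ≤ w := by linarith [htle, show (-t) * (-M j j) = t * M j j from by ring]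
    have h3 : t * w ≤ t * (t * M j j) := mul_le_mul_of_nonpos_left htle' (le_of_lt htneg)
    rw [← hwdef] at hk2
    have h4 : t * w < 0 := mul_neg_of_neg_of_pos htneg hwj
    clear_value t w
    nlinarith [hk2, h3, h4]
  exact ⟨a, ⟨ha0, hw, hcomp⟩, fun b hb => uniq a b ⟨ha0, hw, hcomp⟩ hb⟩

/-- Abstract Zariski q-decomposition relative to a finite family: for every `D`
there exist unique nonnegative reals `a_i` such that `P = D - ∑ a_i E_i`
pairs nonnegatively with every `E_j`, and `a_j * B (P, E_j) = 0` for all `j`. -/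
theorem zariski_q_decomposition
    {V : Type*} [AddCommGroup V] [Module ℝ V] [FiniteDimensional ℝ V]
    (B : V →ₗ[ℝ] V →ₗ[ℝ] ℝ) (hsymm : ∀ u v : V, B u v = B v u)
    {k : ℕ} (E : Fin k → V)
    (hoffdiag : ∀ i j : Fin k, i ≠ j → 0 ≤ B (E i) (E j))
    (hnegdef : ∀ x : Fin k → ℝ, x ≠ 0 →
      (∑ i : Fin k, ∑ j : Fin k, x i * x j * B (E i) (E j)) < 0)
    (D : V) :
    ∃! a : Fin k → ℝ, (∀ i : Fin k, 0 ≤ a i) ∧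
      (∀ j : Fin k, 0 ≤ B (D - ∑ i : Fin k, a i • E i) (E j)) ∧
      (∀ j : Fin k, a j * B (D - ∑ i : Fin k, a i • E i) (E j) = 0) := by
  have hexp : ∀ (x : Fin k → ℝ) (j : Fin k),
      B (D - ∑ i : Fin k, x i • E i) (E j)
        = B D (E j) - ∑ i : Fin k, x i * B (E i) (E j) := by
    intro x j
    simp [map_sub, map_sum, map_smul, LinearMap.sub_apply, LinearMap.smul_apply,
      smul_eq_mul, Finset.sum_apply]
  simp only [hexp]
  exact zar_lcp (fun i j => B (E i) (E j)) (fun i j => hsymm (E i) (E j))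
    hnegdef (fun j => B D (E j))
end

section
/- Minimality of the negative part: suppose a_1, …, a_k ≥ 0 are such that P = D − ∑_i a_i E_i satisfies B(P, E_j) ≥ 0 and a_j · B(P, E_j) = 0 for every j. If c_1, …, c_k ≥ 0 satisfy B(D − ∑_i c_i E_i, E_j) ≥ 0 for every j, then c_j ≥ a_j for every j. -/
open BigOperators

/-- Minimality of the negative part of the Zariski q-decomposition: the
coefficients `a` of the canonical negative part are dominated by the
coefficients `c` of any other effective correction making `D - ∑ c_i E_i`
pair nonnegatively with every `E_j`. -/
theorem zariski_negative_part_minimal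
    {V : Type*} [AddCommGroup V] [Module ℝ V] [FiniteDimensional ℝ V]
    (B : V →ₗ[ℝ] V →ₗ[ℝ] ℝ) (hsymm : ∀ u v : V, B u v = B v u)
    {k : ℕ} (E : Fin k → V)
    (hoffdiag : ∀ i j : Fin k, i ≠ j → 0 ≤ B (E i) (E j))
    (hnegdef : ∀ x : Fin k → ℝ, x ≠ 0 →
      (∑ i : Fin k, ∑ j : Fin k, x i * x j * B (E i) (E j)) < 0)
    (D : V) (a : Fin k → ℝ) (ha : ∀ i : Fin k, 0 ≤ a i)
    (haP : ∀ j : Fin k, 0 ≤ B (D - ∑ i : Fin k, a i • E i) (E j))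
    (haPzero : ∀ j : Fin k, a j * B (D - ∑ i : Fin k, a i • E i) (E j) = 0)
    (c : Fin k → ℝ) (hc : ∀ i : Fin k, 0 ≤ c i)
    (hcP : ∀ j : Fin k, 0 ≤ B (D - ∑ i : Fin k, c i • E i) (E j)) :
    ∀ j : Fin k, a j ≤ c j := by
  set y : Fin k → ℝ := fun i => max (a i - c i) 0 with hy
  set z : Fin k → ℝ := fun i => max (c i - a i) 0 with hz
  have hy0 : ∀ i, 0 ≤ y i := fun i => le_max_right _ _
  have hz0 : ∀ i, 0 ≤ z i := fun i => le_max_right _ _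
  have hyz : ∀ i, y i - z i = a i - c i := by
    intro i
    simp only [hy, hz, max_def]
    split_ifs <;> linarith
  have hBsum : ∀ j, B (∑ i, y i • E i) (E j) = ∑ i, y i * B (E i) (E j) := by
    intro j
    simp [map_sum, LinearMap.sum_apply, LinearMap.smul_apply, smul_eq_mul]
  have hkey : ∀ j, 0 ≤ y j * B (∑ i, y i • E i) (E j) := by
    intro j
    rcases eq_or_lt_of_le (hy0 j) with h | h
    · rw [← h]; ring_nf; simp
    · have hacj : c j < a j := by
        by_contra hcon
        push_neg at hcon
        have : y j = 0 := by simp [hy]; linarith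
        linarith
      have hPa0 : B (D - ∑ i, a i • E i) (E j) = 0 := by
        have haj : a j ≠ 0 := by
          have := hc j; intro h0; rw [h0] at hacj; linarith
        exact (mul_eq_zero.mp (haPzero j)).resolve_left haj
      have hsum : (∑ i, y i • E i)
          = ((D - ∑ i, c i • E i) - (D - ∑ i, a i • E i)) + ∑ i, z i • E i := by
        have h1 : (∑ i, y i • E i) = ∑ i, (a i • E i - c i • E i + z i • E i) := by
          refine Finset.sum_congr rfl fun i _ => ?_
          rw [show y i = a i - c i + z i from by linarith [hyz i]]
          module
        rw [h1, Finset.sum_add_distrib, Finset.sum_sub_distrib]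
        abel
      have hBz : 0 ≤ ∑ i, z i * B (E i) (E j) := by
        refine Finset.sum_nonneg fun i _ => ?_
        rcases eq_or_ne i j with rfl | hne
        · have : z i = 0 := by simp [hz]; linarith
          simp [this]
        · exact mul_nonneg (hz0 i) (hoffdiag i j hne)
      have hBpos : 0 ≤ B (∑ i, y i • E i) (E j) := by
        rw [hsum, map_add, map_sub, LinearMap.add_apply, LinearMap.sub_apply]
        have hBzeq : B (∑ i, z i • E i) (E j) = ∑ i, z i * B (E i) (E j) := by
          simp [map_sum, LinearMap.sum_apply, LinearMap.smul_apply, smul_eq_mul]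
        rw [hBzeq, hPa0]
        have := hcP j
        linarith
      exact mul_nonneg (hy0 j) hBpos
  have hy_eq : y = 0 := by
    by_contra hne
    have hneg := hnegdef y hne
    have hpos : 0 ≤ ∑ i, ∑ j, y i * y j * B (E i) (E j) := by
      have heq : ∑ i, ∑ j, y i * y j * B (E i) (E j)
          = ∑ j, y j * B (∑ i, y i • E i) (E j) := by
        rw [Finset.sum_comm]
        refine Finset.sum_congr rfl fun j _ => ?_
        rw [hBsum j, Finset.mul_sum]
        exact Finset.sum_congr rfl fun i _ => by ring
      rw [heq]
      exact Finset.sum_nonneg fun j _ => hkey j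
    linarith
  intro j
  have hj : y j = 0 := congrFun hy_eq j
  have : a j - c j ≤ 0 := by
    by_contra hcon
    push_neg at hcon
    simp [hy, max_eq_left hcon.le] at hj
    linarith
  linarith
end

section
/- Uniqueness of the Zariski q-decomposition: let E_1, …, E_m ∈ V be pairwise distinct vectors with B(E_i, E_j) ≥ 0 for all i ≠ j, and let S, T ⊆ {1, …, m} be subsets such that the Gram matrix of (E_i)_{i∈S} is negative definite and the Gram matrix of (E_j)_{j∈T} is negative definite. Suppose D = P + ∑_{i∈S} a_i E_i = P' + ∑_{j∈T} b_j E_j where a_i > 0 for i ∈ S, b_j > 0 for j ∈ T, B(P, E_l) ≥ 0 and B(P', E_l) ≥ 0 for all l ∈ S ∪ T, B(P, E_i) = 0 for all i ∈ S, and B(P', E_j) = 0 for all j ∈ T. Then P = P' and ∑_{i∈S} a_i E_i = ∑_{j∈T} b_j E_j. -/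
open BigOperators

/-- Uniqueness of the Zariski q-decomposition: two decompositions
`D = P + ∑_{i ∈ S} a_i E_i = P' + ∑_{j ∈ T} b_j E_j`, with positive
coefficients, negative definite Gram matrices on the supports, and
orthogonality/nonnegativity conditions, must coincide. -/
theorem zariski_q_decomposition_unique
    {V : Type*} [AddCommGroup V] [Module ℝ V] [FiniteDimensional ℝ V]
    (B : V →ₗ[ℝ] V →ₗ[ℝ] ℝ) (hsymm : ∀ u v : V, B u v = B v u)
    {m : ℕ} (E : Fin m → V) (hE : Function.Injective E)
    (hoffdiag : ∀ i j : Fin m, i ≠ j → 0 ≤ B (E i) (E j))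
    (S T : Finset (Fin m))
    (hS : ∀ x : Fin m → ℝ, (∀ i, i ∉ S → x i = 0) → x ≠ 0 →
      (∑ i ∈ S, ∑ j ∈ S, x i * x j * B (E i) (E j)) < 0)
    (hT : ∀ x : Fin m → ℝ, (∀ j, j ∉ T → x j = 0) → x ≠ 0 →
      (∑ i ∈ T, ∑ j ∈ T, x i * x j * B (E i) (E j)) < 0)
    (D P P' : V) (a b : Fin m → ℝ)
    (ha : ∀ i ∈ S, 0 < a i) (hb : ∀ j ∈ T, 0 < b j)
    (hdecS : D = P + ∑ i ∈ S, a i • E i)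
    (hdecT : D = P' + ∑ j ∈ T, b j • E j)
    (hPnn : ∀ l ∈ S ∪ T, 0 ≤ B P (E l))
    (hP'nn : ∀ l ∈ S ∪ T, 0 ≤ B P' (E l))
    (hPS : ∀ i ∈ S, B P (E i) = 0)
    (hP'T : ∀ j ∈ T, B P' (E j) = 0) :
    P = P' ∧ (∑ i ∈ S, a i • E i) = ∑ j ∈ T, b j • E j := by
  classical
  set x : Fin m → ℝ :=
    fun i => (if i ∈ S then a i else 0) - (if i ∈ T then b i else 0) with hxdef
  set xp : Fin m → ℝ := fun i => max (x i) 0 with hxpdef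
  set xn : Fin m → ℝ := fun i => max (-(x i)) 0 with hxndef
  have hxpnn : ∀ i, 0 ≤ xp i := fun i => le_max_right _ _
  have hxnnn : ∀ i, 0 ≤ xn i := fun i => le_max_right _ _
  have hxps : ∀ i, i ∉ S → xp i = 0 := by
    intro i hi
    have hx0 : x i ≤ 0 := by
      simp only [hxdef]
      rw [if_neg hi]
      split_ifs with h
      · linarith [hb i h]
      · norm_num
    simp [hxpdef, max_eq_right hx0]
  have hxnt : ∀ i, i ∉ T → xn i = 0 := by
    intro i hi
    have hx0 : 0 ≤ x i := by
      simp only [hxdef]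
      rw [if_neg hi]
      split_ifs with h
      · linarith [ha i h]
      · norm_num
    have : -(x i) ≤ 0 := by linarith
    simp [hxndef, max_eq_right this]
  have hxsub : ∀ i, x i = xp i - xn i := by
    intro i
    simp only [hxpdef, hxndef]
    rcases le_total (x i) 0 with h | h
    · rw [max_eq_right h, max_eq_left (by linarith)]; ring
    · rw [max_eq_left h, max_eq_right (by linarith)]; ring
  have hxp_pos : ∀ i, xp i ≠ 0 → 0 < x i := by
    intro i hi
    by_contra h
    push_neg at h
    exact hi (by simp [hxpdef, max_eq_right h])
  have hxn_neg : ∀ i, xn i ≠ 0 → x i < 0 := by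
    intro i hi
    by_contra h
    push_neg at h
    exact hi (by simp [hxndef, max_eq_right (by linarith : -(x i) ≤ 0)])
  -- bilinear expansion lemmas
  have hbilr : ∀ (w : V) (U : Finset (Fin m)) (c : Fin m → ℝ),
      B w (∑ i ∈ U, c i • E i) = ∑ i ∈ U, c i * B w (E i) := by
    intro w U c
    simp [map_sum, map_smul, smul_eq_mul]
  have hbill : ∀ (w : V) (U : Finset (Fin m)) (c : Fin m → ℝ),
      B (∑ i ∈ U, c i • E i) w = ∑ i ∈ U, c i * B (E i) w := by
    intro w U c
    simp [map_sum, map_smul, LinearMap.sum_apply, LinearMap.smul_apply, smul_eq_mul]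
  have hbil : ∀ (U W : Finset (Fin m)) (c d : Fin m → ℝ),
      B (∑ i ∈ U, c i • E i) (∑ j ∈ W, d j • E j)
        = ∑ i ∈ U, ∑ j ∈ W, c i * d j * B (E i) (E j) := by
    intro U W c d
    rw [hbill]
    refine Finset.sum_congr rfl fun i _ => ?_
    rw [hbilr, Finset.mul_sum]
    exact Finset.sum_congr rfl fun j _ => by ring
  set A : V := ∑ i ∈ S, xp i • E i with hAdef
  set Bv : V := ∑ j ∈ T, xn j • E j with hBvdef
  -- key vector identity: A - Bv = P' - P
  have hNsum : (∑ i ∈ S, a i • E i) - (∑ j ∈ T, b j • E j)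
      = ∑ i ∈ S ∪ T, x i • E i := by
    have h1 : (∑ i ∈ S, a i • E i)
        = ∑ i ∈ S ∪ T, (if i ∈ S then a i else 0) • E i := by
      rw [← Finset.sum_subset (Finset.subset_union_left : S ⊆ S ∪ T)
        (fun i _ hi => by rw [if_neg hi, zero_smul])]
      exact Finset.sum_congr rfl fun i hi => by rw [if_pos hi]
    have h2 : (∑ j ∈ T, b j • E j)
        = ∑ j ∈ S ∪ T, (if j ∈ T then b j else 0) • E j := by
      rw [← Finset.sum_subset (Finset.subset_union_right : T ⊆ S ∪ T)
        (fun i _ hi => by rw [if_neg hi, zero_smul])]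
      exact Finset.sum_congr rfl fun i hi => by rw [if_pos hi]
    rw [h1, h2, ← Finset.sum_sub_distrib]
    exact Finset.sum_congr rfl fun i _ => by rw [← sub_smul]
  have hABsum : A - Bv = ∑ i ∈ S ∪ T, x i • E i := by
    have h1 : A = ∑ i ∈ S ∪ T, xp i • E i := by
      rw [hAdef,
        Finset.sum_subset Finset.subset_union_left (fun i _ hi => by simp [hxps i hi])]
    have h2 : Bv = ∑ j ∈ S ∪ T, xn j • E j := by
      rw [hBvdef,
        Finset.sum_subset Finset.subset_union_right (fun i _ hi => by simp [hxnt i hi])]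
    rw [h1, h2, ← Finset.sum_sub_distrib]
    exact Finset.sum_congr rfl fun i _ => by rw [← sub_smul, ← hxsub]
  have hkey : A - Bv = P' - P := by
    rw [hABsum, ← hNsum]
    have hD := hdecS.symm.trans hdecT
    rw [sub_eq_sub_iff_add_eq_add, add_comm]
    exact hD
  -- B A Bv ≥ 0
  have hABnn : 0 ≤ B A Bv := by
    rw [hAdef, hBvdef, hbil]
    apply Finset.sum_nonneg; intro i _
    apply Finset.sum_nonneg; intro j _
    rcases eq_or_ne (xp i * xn j) 0 with h | h
    · rw [h, zero_mul]
    · have hxi : xp i ≠ 0 := fun h0 => h (by rw [h0, zero_mul])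
      have hxj : xn j ≠ 0 := fun h0 => h (by rw [h0, mul_zero])
      have hij : i ≠ j := by
        intro hij
        have := hxp_pos i hxi
        have := hxn_neg j hxj
        rw [hij] at *; linarith
      exact mul_nonneg (mul_nonneg (hxpnn i) (hxnnn j)) (hoffdiag i j hij)
  -- B Bv A ≥ 0
  have hBAnn : 0 ≤ B Bv A := by rw [hsymm]; exact hABnn
  -- xp = 0
  have hxp0 : xp = 0 := by
    by_contra hne
    have hlt := hS xp hxps hne
    have hAA : B A A = ∑ i ∈ S, ∑ j ∈ S, xp i * xp j * B (E i) (E j) := by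
      rw [hAdef, hbil]
    have hA' : A = Bv + (P' - P) := by rw [← hkey]; abel
    have hAP' : 0 ≤ B A P' := by
      rw [hAdef, hbill]
      apply Finset.sum_nonneg; intro i hi
      rw [hsymm]
      exact mul_nonneg (hxpnn i) (hP'nn i (Finset.mem_union_left _ hi))
    have hAP : B A P = 0 := by
      rw [hAdef, hbill]
      apply Finset.sum_eq_zero; intro i hi
      rw [hsymm, hPS i hi, mul_zero]
    have : 0 ≤ B A A := by
      have : B A A = B A Bv + B A P' - B A P := by
        nth_rewrite 2 [hA']
        simp only [map_add, map_sub]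
        ring
      rw [this, hAP]
      linarith
    rw [hAA] at this
    linarith
  -- xn = 0
  have hxn0 : xn = 0 := by
    by_contra hne
    have hlt := hT xn hxnt hne
    have hBB : B Bv Bv = ∑ i ∈ T, ∑ j ∈ T, xn i * xn j * B (E i) (E j) := by
      rw [hBvdef, hbil]
    have hB' : Bv = A - (P' - P) := by rw [← hkey]; abel
    have hBP : 0 ≤ B Bv P := by
      rw [hBvdef, hbill]
      apply Finset.sum_nonneg; intro j hj
      rw [hsymm]
      exact mul_nonneg (hxnnn j) (hPnn j (Finset.mem_union_right _ hj))
    have hBP' : B Bv P' = 0 := by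
      rw [hBvdef, hbill]
      apply Finset.sum_eq_zero; intro j hj
      rw [hsymm, hP'T j hj, mul_zero]
    have : 0 ≤ B Bv Bv := by
      have : B Bv Bv = B Bv A - B Bv P' + B Bv P := by
        nth_rewrite 2 [hB']
        simp only [map_add, map_sub]
        ring
      rw [this, hBP']
      linarith
    rw [hBB] at this
    linarith
  have hx0 : ∀ i, x i = 0 := by
    intro i
    rw [hxsub i, congrFun hxp0 i, congrFun hxn0 i]
    simp
  have hNN : (∑ i ∈ S, a i • E i) = ∑ j ∈ T, b j • E j := by
    have : (∑ i ∈ S, a i • E i) - (∑ j ∈ T, b j • E j) = 0 := by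
      rw [hNsum]
      apply Finset.sum_eq_zero
      intro i _
      rw [hx0 i, zero_smul]
    exact sub_eq_zero.mp this
  exact ⟨by
    have h := hdecS.symm.trans hdecT
    rw [← hNN] at h
    exact add_right_cancel h, hNN⟩
end

section
/- Coefficient domination (core of Lemma 2.1(3), second part): suppose D = ∑_i d_i E_i + D' where d_i ≥ 0 for all i and B(D', E_j) ≥ 0 for every j. If e ∈ ℝ^k satisfies B(D − ∑_i e_i E_i, E_j) ≤ 0 for every j, then e_j ≤ d_j for every j. -/
open BigOperators

/-- Coefficient domination (core of Lemma 2.1(3), second part): if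
`D = ∑ d_i E_i + D'` with `d_i ≥ 0` and `B (D', E_j) ≥ 0` for all `j`, and
`e` satisfies `B (D - ∑ e_i E_i, E_j) ≤ 0` for all `j`, then `e_j ≤ d_j`
for all `j`. -/
theorem coefficient_domination
    {V : Type*} [AddCommGroup V] [Module ℝ V] [FiniteDimensional ℝ V]
    (B : V →ₗ[ℝ] V →ₗ[ℝ] ℝ) (hsymm : ∀ u v : V, B u v = B v u)
    {k : ℕ} (E : Fin k → V)
    (hoffdiag : ∀ i j : Fin k, i ≠ j → 0 ≤ B (E i) (E j))
    (hnegdef : ∀ x : Fin k → ℝ, x ≠ 0 →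
      (∑ i : Fin k, ∑ j : Fin k, x i * x j * B (E i) (E j)) < 0)
    (D D' : V) (d : Fin k → ℝ) (hd : ∀ i : Fin k, 0 ≤ d i)
    (hdec : D = (∑ i : Fin k, d i • E i) + D')
    (hD' : ∀ j : Fin k, 0 ≤ B D' (E j))
    (e : Fin k → ℝ)
    (he : ∀ j : Fin k, B (D - ∑ i : Fin k, e i • E i) (E j) ≤ 0) :
    ∀ j : Fin k, e j ≤ d j := by
  -- key inequality: ∑ i (e i - d i) * B(E i)(E j) ≥ 0 for all j
  have hkey : ∀ j : Fin k, 0 ≤ ∑ i : Fin k, (e i - d i) * B (E i) (E j) := by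
    intro j
    have h1 := he j
    rw [hdec] at h1
    simp only [map_sub, map_add, map_sum, map_smul, LinearMap.sub_apply,
      LinearMap.add_apply, LinearMap.sum_apply, LinearMap.smul_apply,
      smul_eq_mul] at h1
    have h2 := hD' j
    have : ∑ i : Fin k, (e i - d i) * B (E i) (E j)
        = ∑ i : Fin k, e i * B (E i) (E j) - ∑ i : Fin k, d i * B (E i) (E j) := by
      rw [← Finset.sum_sub_distrib]
      congr 1; ext i; ring
    linarith [this ▸ (by linarith : (0:ℝ) ≤ ∑ i : Fin k, e i * B (E i) (E j) - ∑ i : Fin k, d i * B (E i) (E j))]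
  set x : Fin k → ℝ := fun i => max (e i - d i) 0 with hx
  have hxnonneg : ∀ i, 0 ≤ x i := fun i => le_max_right _ _
  have hxge : ∀ i, e i - d i ≤ x i := fun i => le_max_left _ _
  have hxzero : x = 0 := by
    by_contra hne
    have hlt := hnegdef x hne
    have hge : 0 ≤ ∑ i : Fin k, ∑ j : Fin k, x i * x j * B (E i) (E j) := by
      rw [Finset.sum_comm]
      apply Finset.sum_nonneg
      intro j _
      rcases eq_or_lt_of_le (hxnonneg j) with h0 | hpos
      · apply Finset.sum_nonneg
        intro i _
        rw [← h0]; ring_nf; simp [← h0]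
      · -- x j > 0, so x j = e j - d j
        have hxj : x j = e j - d j := by
          rcases max_cases (e j - d j) 0 with ⟨h, _⟩ | ⟨h, _⟩
          · exact h
          · exfalso; rw [hx] at hpos; simp only at hpos; linarith
        have step : ∑ i : Fin k, (e i - d i) * B (E i) (E j)
            ≤ ∑ i : Fin k, x i * B (E i) (E j) := by
          apply Finset.sum_le_sum
          intro i _
          rcases eq_or_ne i j with rfl | hij
          · rw [hxj]
          · exact mul_le_mul_of_nonneg_right (hxge i) (hoffdiag i j hij)
        have h3 : 0 ≤ ∑ i : Fin k, x i * B (E i) (E j) := le_trans (hkey j) step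
        calc (0:ℝ) ≤ (∑ i : Fin k, x i * B (E i) (E j)) * x j :=
              mul_nonneg h3 (hxnonneg j)
          _ = ∑ i : Fin k, x i * x j * B (E i) (E j) := by
              rw [Finset.sum_mul]; exact Finset.sum_congr rfl fun i _ => by ring
    linarith
  intro j
  have h0 : x j = 0 := congrFun hxzero j
  linarith [hxge j]
end

section
/- Matrix complementarity form of the Zariski q-decomposition: let M be a k×k real symmetric matrix that is negative definite and has nonnegative off-diagonal entries (M i j ≥ 0 for all i ≠ j). Then for every b ∈ ℝ^k there exists a unique a ∈ ℝ^k with a ≥ 0 entrywise, (b − M.mulVec a) j ≥ 0 for every j, and a j · (b − M.mulVec a) j = 0 for every j. -/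
open Matrix BigOperators

private lemma zariski_symm_dot {k : ℕ} {M : Matrix (Fin k) (Fin k) ℝ} (hsymm : M.IsSymm)
    (v w : Fin k → ℝ) : v ⬝ᵥ M.mulVec w = w ⬝ᵥ M.mulVec v := by
  rw [dotProduct_mulVec]
  nth_rewrite 1 [← hsymm]
  rw [vecMul_transpose, dotProduct_comm]

/-- Matrix complementarity form of the Zariski q-decomposition: for a real
symmetric negative definite matrix `M` with nonnegative off-diagonal entries
and any `b`, there is a unique entrywise nonnegative `a` with
`(b - M.mulVec a) j ≥ 0` for all `j` and complementarity
`a j * (b - M.mulVec a) j = 0` for all `j`. -/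
theorem zariski_matrix_complementarity {k : ℕ}
    (M : Matrix (Fin k) (Fin k) ℝ) (hsymm : M.IsSymm)
    (hnegdef : ∀ x : Fin k → ℝ, x ≠ 0 → x ⬝ᵥ M.mulVec x < 0)
    (hoffdiag : ∀ i j : Fin k, i ≠ j → 0 ≤ M i j)
    (b : Fin k → ℝ) :
    ∃! a : Fin k → ℝ, (∀ i : Fin k, 0 ≤ a i) ∧
      (∀ j : Fin k, 0 ≤ (b - M.mulVec a) j) ∧
      (∀ j : Fin k, a j * (b - M.mulVec a) j = 0) := by
  classical
  -- Existence
  have hex : ∃ a : Fin k → ℝ, (∀ i : Fin k, 0 ≤ a i) ∧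
      (∀ j : Fin k, 0 ≤ (b - M.mulVec a) j) ∧
      (∀ j : Fin k, a j * (b - M.mulVec a) j = 0) := by
    rcases Nat.eq_zero_or_pos k with hk | hk
    · subst hk
      exact ⟨0, fun i => i.elim0, fun j => j.elim0, fun j => j.elim0⟩
    -- coercivity constant
    haveI : Nonempty (Fin k) := ⟨⟨0, hk⟩⟩
    have hcont : Continuous fun x : Fin k → ℝ => x ⬝ᵥ M.mulVec x := by
      unfold dotProduct mulVec dotProduct
      fun_prop
    have hsphne : (Metric.sphere (0 : Fin k → ℝ) 1).Nonempty :=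
      NormedSpace.sphere_nonempty.mpr zero_le_one
    obtain ⟨x0, hx0mem, hx0min⟩ :=
      (isCompact_sphere (0 : Fin k → ℝ) 1).exists_isMinOn hsphne
        (Continuous.continuousOn (by fun_prop : Continuous fun x : Fin k → ℝ => -(x ⬝ᵥ M.mulVec x)))
    set c : ℝ := -(x0 ⬝ᵥ M.mulVec x0) with hcdef
    have hx0ne : x0 ≠ 0 := by
      intro h
      rw [h] at hx0mem
      simp at hx0mem
    have hc_pos : 0 < c := by
      rw [hcdef]
      have := hnegdef x0 hx0ne
      linarith
    have hc : ∀ x : Fin k → ℝ, x ⬝ᵥ M.mulVec x ≤ -c * ‖x‖ ^ 2 := by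
      intro x
      by_cases hx : x = 0
      · subst hx; simp
      have hs : 0 < ‖x‖ := norm_pos_iff.mpr hx
      have hmem : ‖x‖⁻¹ • x ∈ Metric.sphere (0 : Fin k → ℝ) 1 := by
        simp [norm_smul, abs_of_pos (inv_pos.mpr hs), inv_mul_cancel₀ hs.ne']
      have hmin := hx0min hmem
      have hyq : (‖x‖⁻¹ • x) ⬝ᵥ M.mulVec (‖x‖⁻¹ • x)
          = ‖x‖⁻¹ * (‖x‖⁻¹ * (x ⬝ᵥ M.mulVec x)) := by
        simp [smul_dotProduct, mulVec_smul, dotProduct_smul, smul_eq_mul, mul_assoc]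
      simp only [Set.mem_setOf_eq] at hmin
      rw [hyq, ← hcdef] at hmin
      have h4 : ‖x‖⁻¹ * (‖x‖⁻¹ * (x ⬝ᵥ M.mulVec x)) ≤ -c := by linarith
      calc x ⬝ᵥ M.mulVec x
          = ‖x‖ * ‖x‖ * (‖x‖⁻¹ * (‖x‖⁻¹ * (x ⬝ᵥ M.mulVec x))) := by
            field_simp
        _ ≤ ‖x‖ * ‖x‖ * (-c) := mul_le_mul_of_nonneg_left h4 (by positivity)
        _ = -c * ‖x‖ ^ 2 := by ring
    clear_value c
    -- linear bound
    set B : ℝ := ∑ i, |b i| with hBdef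
    have hB_nonneg : 0 ≤ B := by
      rw [hBdef]
      exact Finset.sum_nonneg fun i _ => abs_nonneg _
    have hBx : ∀ x : Fin k → ℝ, -(B * ‖x‖) ≤ b ⬝ᵥ x := by
      intro x
      have hterm : ∀ i ∈ Finset.univ, -(|b i| * ‖x‖) ≤ b i * x i := by
        intro i _
        have hxi : |x i| ≤ ‖x‖ := by
          simpa [Real.norm_eq_abs] using norm_le_pi_norm x i
        have habs : |b i * x i| = |b i| * |x i| := abs_mul _ _
        have h2 : |b i| * |x i| ≤ |b i| * ‖x‖ :=
          mul_le_mul_of_nonneg_left hxi (abs_nonneg _)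
        have h3 : -|b i * x i| ≤ b i * x i := neg_abs_le _
        linarith
      calc -(B * ‖x‖) = ∑ i, -(|b i| * ‖x‖) := by
            rw [hBdef, Finset.sum_mul, ← Finset.sum_neg_distrib]
        _ ≤ ∑ i, b i * x i := Finset.sum_le_sum hterm
        _ = b ⬝ᵥ x := rfl
    clear_value B
    -- the objective function
    set f : (Fin k → ℝ) → ℝ := fun x => b ⬝ᵥ x - x ⬝ᵥ M.mulVec x / 2 with hfdef
    have hfcont : Continuous f := by
      rw [hfdef]
      apply Continuous.sub _ (hcont.div_const 2)
      unfold dotProduct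
      fun_prop
    clear_value f
    set R : ℝ := (2 * B + 2) / c with hRdef
    have hcR : c * R = 2 * B + 2 := by
      rw [hRdef]; field_simp [hc_pos.ne']
    have hR_pos : 0 < R := by
      rw [hRdef]
      exact div_pos (by linarith) hc_pos
    clear_value R
    have hSclosed : IsClosed {x : Fin k → ℝ | ∀ i, 0 ≤ x i} := by
      have : {x : Fin k → ℝ | ∀ i, 0 ≤ x i} = ⋂ i, {x : Fin k → ℝ | 0 ≤ x i} := by
        ext x; simp
      rw [this]
      exact isClosed_iInter fun i => isClosed_le continuous_const (continuous_apply i)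
    have hKcomp : IsCompact ({x : Fin k → ℝ | ∀ i, 0 ≤ x i} ∩ Metric.closedBall 0 R) :=
      (isCompact_closedBall (0 : Fin k → ℝ) R).inter_left hSclosed
    have h0K : (0 : Fin k → ℝ) ∈ {x : Fin k → ℝ | ∀ i, 0 ≤ x i} ∩ Metric.closedBall 0 R := by
      constructor
      · intro i; simp
      · simp [hR_pos.le]
    obtain ⟨a, haK, hamin⟩ := hKcomp.exists_isMinOn ⟨0, h0K⟩ hfcont.continuousOn
    have ha_nonneg : ∀ i, 0 ≤ a i := haK.1
    have hf0 : f 0 = 0 := by simp [hfdef]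
    -- global minimality over the orthant
    have hglobal : ∀ x : Fin k → ℝ, (∀ i, 0 ≤ x i) → f a ≤ f x := by
      intro x hx
      by_cases hxR : ‖x‖ ≤ R
      · exact hamin ⟨hx, by simpa [Metric.mem_closedBall] using hxR⟩
      · push_neg at hxR
        have h1 := hBx x
        have h2 := hc x
        have hfa0 : f a ≤ 0 := by
          have := hamin h0K
          simpa [hf0] using this
        have hfx : 0 < f x := by
          have hxpos : 0 < ‖x‖ := lt_trans hR_pos hxR
          have h3 : f x ≥ -(B * ‖x‖) + c * ‖x‖ ^ 2 / 2 := by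
            simp only [hfdef]
            nlinarith
          have h4 : c * R * ‖x‖ < c * ‖x‖ * ‖x‖ :=
            mul_lt_mul_of_pos_right (mul_lt_mul_of_pos_left hxR hc_pos) hxpos
          rw [hcR] at h4
          nlinarith [h3, h4, hxpos]
        linarith
    -- quadratic expansion along coordinate directions
    have hexp : ∀ (j : Fin k) (t : ℝ),
        f (a + t • (Pi.single j 1 : Fin k → ℝ)) = f a + t * (b - M.mulVec a) j - t ^ 2 * M j j / 2 := by
      intro j t
      set e : Fin k → ℝ := (Pi.single j 1 : Fin k → ℝ) with he
      have h1 : a ⬝ᵥ M.mulVec e = M.mulVec a j := by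
        rw [zariski_symm_dot hsymm]
        simp [he, single_dotProduct]
      have h2 : e ⬝ᵥ M.mulVec e = M j j := by
        simp [he, single_dotProduct, mulVec_single]
      have h3 : e ⬝ᵥ M.mulVec a = M.mulVec a j := by
        simp [he, single_dotProduct]
      have h4 : b ⬝ᵥ e = b j := by simp [he, dotProduct_single]
      simp only [hfdef, mulVec_add, mulVec_smul, dotProduct_add, add_dotProduct,
        dotProduct_smul, smul_dotProduct, smul_eq_mul, Pi.sub_apply]
      rw [h1, h2, h3, h4]
      ring
    have hMjj : ∀ j : Fin k, M j j < 0 := by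
      intro j
      have hne : (Pi.single j 1 : Fin k → ℝ) ≠ 0 := by
        intro h
        have := congrFun h j
        simp at this
      have hq := hnegdef (Pi.single j 1) hne
      have h2 : (Pi.single j 1 : Fin k → ℝ) ⬝ᵥ M.mulVec (Pi.single j 1) = M j j := by
        simp [single_dotProduct, mulVec_single]
      rw [h2] at hq
      exact hq
    -- membership of perturbations
    have hmemS : ∀ (j : Fin k) (t : ℝ), -(a j) ≤ t →
        ∀ i, 0 ≤ (a + t • (Pi.single j 1 : Fin k → ℝ)) i := by
      intro j t ht i
      by_cases hij : i = j
      · subst hij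
        simp only [Pi.add_apply, Pi.smul_apply, Pi.single_eq_same, smul_eq_mul, mul_one]
        linarith
      · simp only [Pi.add_apply, Pi.smul_apply, Pi.single_eq_of_ne hij, smul_eq_mul, mul_zero,
          add_zero]
        exact ha_nonneg i
    -- nonnegativity of slack
    have hw : ∀ j : Fin k, 0 ≤ (b - M.mulVec a) j := by
      intro j
      by_contra hneg
      push_neg at hneg
      set w : ℝ := (b - M.mulVec a) j with hwdef
      set d : ℝ := -(M j j) with hddef
      have hMd : M j j = -d := by simp [hddef]
      have hd : 0 < d := by rw [hddef]; have := hMjj j; linarith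
      set t : ℝ := -w / d with htdef
      have htd : t * d = -w := by rw [htdef]; field_simp
      have ht : 0 < t := by rw [htdef]; exact div_pos (by linarith) hd
      clear_value w d t
      have hmem := hmemS j t (by linarith [ha_nonneg j])
      have hge := hglobal _ hmem
      rw [hexp j t, ← hwdef, hMd] at hge
      have h6 : t ^ 2 * d = t * -w := by rw [pow_two, mul_assoc, htd]
      nlinarith [mul_pos ht (show (0:ℝ) < -w by linarith)]
    -- complementarity
    have hcomp : ∀ j : Fin k, a j * (b - M.mulVec a) j = 0 := by
      intro j
      rcases eq_or_lt_of_le (ha_nonneg j) with h0 | hpos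
      · rw [← h0]; ring
      rcases eq_or_lt_of_le (hw j) with h0 | hwpos
      · rw [← h0]; ring
      exfalso
      set w : ℝ := (b - M.mulVec a) j with hwdef
      set d : ℝ := -(M j j) with hddef
      have hMd : M j j = -d := by simp [hddef]
      have hd : 0 < d := by rw [hddef]; have := hMjj j; linarith
      set t : ℝ := -(min (a j) (w / d)) with htdef
      have hmin_pos : 0 < min (a j) (w / d) := lt_min hpos (div_pos hwpos hd)
      have ht : t < 0 := by rw [htdef]; linarith
      have htlb : -(a j) ≤ t := by
        have h8 : min (a j) (w / d) ≤ a j := min_le_left _ _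
        rw [htdef]; linarith
      have habs : -t ≤ w / d := by
        rw [htdef, neg_neg]; exact min_le_right _ _
      clear_value w d t
      have hmem := hmemS j t htlb
      have hge := hglobal _ hmem
      rw [hexp j t, ← hwdef, hMd] at hge
      have h5 : (-t) * d ≤ w := by
        have h7 := mul_le_mul_of_nonneg_right habs hd.le
        calc (-t) * d ≤ (w / d) * d := h7
          _ = w := by field_simp
      nlinarith [mul_le_mul_of_nonneg_left h5 (show (0:ℝ) ≤ -t by linarith),
        mul_neg_of_neg_of_pos ht hwpos]
    exact ⟨a, ha_nonneg, hw, hcomp⟩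
  -- Uniqueness
  obtain ⟨a, ha⟩ := hex
  refine ⟨a, ha, ?_⟩
  intro a' ha'
  by_contra hne
  have hsub : a' - a ≠ 0 := sub_ne_zero.mpr hne
  have hlt := hnegdef (a' - a) hsub
  have hge : 0 ≤ (a' - a) ⬝ᵥ M.mulVec (a' - a) := by
    have hMu : M.mulVec (a' - a) = fun j => (b - M.mulVec a) j - (b - M.mulVec a') j := by
      funext j
      simp [mulVec_sub]
    rw [hMu]
    unfold dotProduct
    apply Finset.sum_nonneg
    intro j _
    simp only [Pi.sub_apply]
    have c1 := ha'.2.2 j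
    have c2 := ha.2.2 j
    have n1 := mul_nonneg (ha'.1 j) (ha.2.1 j)
    have n2 := mul_nonneg (ha.1 j) (ha'.2.1 j)
    simp only [Pi.sub_apply] at c1 c2 n1 n2
    nlinarith
  linarith
end
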